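/- Let C' be the simple graph on vertex set {1,2,...,11} whose edges are those of the basic block B on {1,...,7} (edge set {12,14,15,17,23,24,25,26,27,34,35,45,46,47,67}) together with the 4-cycle edges {8,9},{9,10},{10,11},{8,11} and the attachment edges {1,8},{7,11}. Then: (i) every legal 2-coloring c of C' with c(8) = white satisfies c(11) = white and the vertices 9 and 10 are not both white; and (ii) for every assignment of colors from {white, gray} to vertices 9 and 10 in which they are not both white, the 2-coloring whose gray class is {1,3,5,6,7} together with those of 9,10 colored gray is a legal 2-coloring of C'. -/

import Mathlib

/-- A set `U` of vertices of a simple graph `G` induces a linear forest: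
the induced subgraph is acyclic and every vertex of `U` has at most 2 neighbors in `U`. -/
def InducesLinearForest {V : Type*} (G : SimpleGraph V) (U : Set V) : Prop :=
  (G.induce U).IsAcyclic ∧ ∀ v ∈ U, {w | w ∈ U ∧ G.Adj v w}.ncard ≤ 2

/-- A legal 2-coloring of `G` (`true` = gray, `false` = white): each color class
induces a linear forest. -/
def IsLegal2Coloring {V : Type*} (G : SimpleGraph V) (c : V → Bool) : Prop :=
  InducesLinearForest G {v | c v = true} ∧ InducesLinearForest G {v | c v = false}

/-- The edge set of the basic building block `B`. -/
def BEdges : Set (ℕ × ℕ) :=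
  {(1,2),(1,4),(1,5),(1,7),(2,3),(2,4),(2,5),(2,6),(2,7),
   (3,4),(3,5),(4,5),(4,6),(4,7),(6,7)}

/-- Vertex set {1, …, 11}. -/
abbrev V11 : Type := {m : ℕ // m ∈ Finset.Icc 1 11}

/-- The edge set of the two-variable clause gadget `C'`: the block `B` together with
the 4-cycle 8–9–10–11–8 and the attachment edges {1,8} and {7,11}. -/
def C'Edges : Set (ℕ × ℕ) :=
  BEdges ∪ {(8,9),(9,10),(10,11),(8,11),(1,8),(7,11)}

/-- The two-variable clause gadget `C'` on vertex set {1, …, 11}. -/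
def C'Graph : SimpleGraph V11 :=
  SimpleGraph.fromRel (fun u v => (u.val, v.val) ∈ C'Edges)

/-! ### Auxiliary decidability instances -/

instance : DecidablePred (· ∈ BEdges) := fun p => by
  unfold BEdges; infer_instance

instance : DecidablePred (· ∈ C'Edges) := fun p => by
  unfold C'Edges; exact Set.decidableUnion _ _ _

instance : DecidableRel C'Graph.Adj := fun u v =>
  decidable_of_iff _ (SimpleGraph.fromRel_adj _ u v).symm

/-! ### General graph-theoretic lemmas -/

/-- A monochromatic triangle gives a cycle. -/
lemma not_acyclic_of_triangle {V : Type*} {G : SimpleGraph V} {a b d : V}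
    (hab : G.Adj a b) (hbd : G.Adj b d) (hda : G.Adj d a) : ¬ G.IsAcyclic := by
  intro h
  have hne1 : a ≠ b := hab.ne
  have hne2 : b ≠ d := hbd.ne
  have hne3 : d ≠ a := hda.ne
  exact h (.cons hab (.cons hbd (.cons hda .nil)))
    (by simp [SimpleGraph.Walk.isCycle_def, SimpleGraph.Walk.isTrail_def, Sym2.eq_iff,
      hne1, hne2, hne3, hne1.symm, hne2.symm, hne3.symm])

/-- A monochromatic 4-cycle gives a cycle. -/
lemma not_acyclic_of_quad {V : Type*} {G : SimpleGraph V} {a b d e : V}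
    (hab : G.Adj a b) (hbd : G.Adj b d) (hde : G.Adj d e) (hea : G.Adj e a)
    (had : a ≠ d) (hbe : b ≠ e) : ¬ G.IsAcyclic := by
  intro h
  have hne1 : a ≠ b := hab.ne
  have hne2 : b ≠ d := hbd.ne
  have hne3 : d ≠ e := hde.ne
  have hne4 : e ≠ a := hea.ne
  exact h (.cons hab (.cons hbd (.cons hde (.cons hea .nil))))
    (by simp [SimpleGraph.Walk.isCycle_def, SimpleGraph.Walk.isTrail_def, Sym2.eq_iff,
      hne1, hne2, hne3, hne4, hne1.symm, hne2.symm, hne3.symm, hne4.symm,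
      had, hbe, had.symm, hbe.symm])

/-- A graph admitting an injective labelling in which adjacent vertices have labels
differing by exactly one is acyclic. -/
lemma isAcyclic_of_labeling {V : Type*} [DecidableEq V] {G : SimpleGraph V} (f : V → ℕ)
    (hinj : Function.Injective f)
    (hadj : ∀ u v, G.Adj u v → f u = f v + 1 ∨ f v = f u + 1) : G.IsAcyclic := by
  intro v c hc
  have hne : c.support.toFinset.Nonempty := by
    simp [List.toFinset_nonempty_iff, SimpleGraph.Walk.support_ne_nil]
  obtain ⟨m, hm, hmax⟩ := Finset.exists_max_image c.support.toFinset f hne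
  simp only [List.mem_toFinset] at hm hmax
  have hcyc' : (c.rotate m hm).IsCycle := hc.rotate hm
  have hsup : ∀ w ∈ (c.rotate m hm).support, f w ≤ f m := by
    intro w hw
    rw [SimpleGraph.Walk.support_eq_cons] at hw
    rcases List.mem_cons.mp hw with rfl | hw
    · exact le_rfl
    · exact hmax w (List.mem_of_mem_tail
        ((SimpleGraph.Walk.support_rotate c m hm).mem_iff.mp hw))
  set c' := c.rotate m hm with hc'def
  clear_value c'
  cases c' with
  | nil => exact hcyc'.ne_nil rfl
  | @cons _ x _ hmx q =>
    cases hrev : q.reverse with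
    | nil => exact absurd rfl hmx.ne
    | @cons _ y _ hmy r =>
      have hxs : x ∈ (SimpleGraph.Walk.cons hmx q).support := by
        simp [SimpleGraph.Walk.support_cons, SimpleGraph.Walk.start_mem_support]
      have hys : y ∈ (SimpleGraph.Walk.cons hmx q).support := by
        have : y ∈ q.reverse.support := by
          rw [hrev]; simp [SimpleGraph.Walk.support_cons, SimpleGraph.Walk.start_mem_support]
        rw [SimpleGraph.Walk.support_reverse, List.mem_reverse] at this
        simp [SimpleGraph.Walk.support_cons, this]
      have hedge : s(m, y) ∈ q.edges := by
        have : s(m, y) ∈ q.reverse.edges := by rw [hrev]; simp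
        rwa [SimpleGraph.Walk.edges_reverse, List.mem_reverse] at this
      have hnodup : (SimpleGraph.Walk.cons hmx q).edges.Nodup := hcyc'.isTrail.edges_nodup
      have hxy : x ≠ y := by
        rintro rfl
        rw [SimpleGraph.Walk.edges_cons] at hnodup
        exact (List.nodup_cons.mp hnodup).1 hedge
      have h1 := hadj m x hmx
      have h2 := hadj m y hmy
      have hx := hsup x hxs
      have hy := hsup y hys
      have : f x = f y := by omega
      exact hxy (hinj this)

/-! ### Consequences of a legal 2-coloring of `C'` -/

lemma mono_tri {c : V11 → Bool} (hL : IsLegal2Coloring C'Graph c) {a b d : V11}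
    (hab : C'Graph.Adj a b) (hbd : C'Graph.Adj b d) (hda : C'Graph.Adj d a) :
    ∀ x : Bool, ¬(c a = x ∧ c b = x ∧ c d = x) := by
  rintro x ⟨ha, hb, hd⟩
  have hacy : (C'Graph.induce {v | c v = x}).IsAcyclic := by
    cases x
    · exact hL.2.1
    · exact hL.1.1
  exact not_acyclic_of_triangle (G := C'Graph.induce {v | c v = x})
    (a := ⟨a, ha⟩) (b := ⟨b, hb⟩) (d := ⟨d, hd⟩) hab hbd hda hacy

lemma mono_quad {c : V11 → Bool} (hL : IsLegal2Coloring C'Graph c) {a b d e : V11}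
    (hab : C'Graph.Adj a b) (hbd : C'Graph.Adj b d) (hde : C'Graph.Adj d e)
    (hea : C'Graph.Adj e a) (had : a ≠ d) (hbe : b ≠ e) :
    ∀ x : Bool, ¬(c a = x ∧ c b = x ∧ c d = x ∧ c e = x) := by
  rintro x ⟨ha, hb, hd, he⟩
  have hacy : (C'Graph.induce {v | c v = x}).IsAcyclic := by
    cases x
    · exact hL.2.1
    · exact hL.1.1
  exact not_acyclic_of_quad (G := C'Graph.induce {v | c v = x})
    (a := ⟨a, ha⟩) (b := ⟨b, hb⟩) (d := ⟨d, hd⟩) (e := ⟨e, he⟩) hab hbd hde hea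
    (by simpa using had) (by simpa using hbe) hacy

lemma mono_deg {c : V11 → Bool} (hL : IsLegal2Coloring C'Graph c) {v a b d : V11}
    (hab : a ≠ b) (had : a ≠ d) (hbd : b ≠ d)
    (h1 : C'Graph.Adj v a) (h2 : C'Graph.Adj v b) (h3 : C'Graph.Adj v d) :
    ∀ x : Bool, ¬(c v = x ∧ c a = x ∧ c b = x ∧ c d = x) := by
  rintro x ⟨hv, ha, hb, hd⟩
  have hU : ∀ u ∈ {w | c w = x}, {w | w ∈ {w | c w = x} ∧ C'Graph.Adj u w}.ncard ≤ 2 := by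
    cases x
    · exact hL.2.2
    · exact hL.1.2
  have hsub : ({a, b, d} : Set V11) ⊆ {w | w ∈ {w | c w = x} ∧ C'Graph.Adj v w} := by
    intro y hy
    simp only [Set.mem_insert_iff, Set.mem_singleton_iff] at hy
    rcases hy with rfl | rfl | rfl
    exacts [⟨ha, h1⟩, ⟨hb, h2⟩, ⟨hd, h3⟩]
  have h3' : ({a, b, d} : Set V11).ncard = 3 :=
    Set.ncard_eq_three.mpr ⟨a, b, d, hab, had, hbd, rfl⟩
  have hle := Set.ncard_le_ncard hsub (Set.toFinite _)
  have := hU v hv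
  omega

/-! ### The boolean core of part (i) -/

set_option synthInstance.maxHeartbeats 1000000 in
set_option synthInstance.maxSize 10000 in
set_option maxHeartbeats 4000000 in
set_option maxRecDepth 10000 in
lemma keyBits : ∀ b1 b2 b3 b4 b5 b6 b7 b8 b9 b10 b11 : Bool,
    (∀ x : Bool, ¬(b1 = x ∧ b2 = x ∧ b4 = x)) →
    (∀ x : Bool, ¬(b2 = x ∧ b4 = x ∧ b5 = x)) →
    (∀ x : Bool, ¬(b2 = x ∧ b4 = x ∧ b6 = x)) →
    (∀ x : Bool, ¬(b2 = x ∧ b4 = x ∧ b7 = x)) →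
    (∀ x : Bool, ¬(b8 = x ∧ b9 = x ∧ b10 = x ∧ b11 = x)) →
    (∀ x : Bool, ¬(b1 = x ∧ b5 = x ∧ b7 = x ∧ b8 = x)) →
    (∀ x : Bool, ¬(b2 = x ∧ b1 = x ∧ b3 = x ∧ b6 = x)) →
    (∀ x : Bool, ¬(b2 = x ∧ b1 = x ∧ b3 = x ∧ b7 = x)) →
    (∀ x : Bool, ¬(b2 = x ∧ b1 = x ∧ b5 = x ∧ b6 = x)) →
    (∀ x : Bool, ¬(b2 = x ∧ b3 = x ∧ b5 = x ∧ b6 = x)) →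
    (∀ x : Bool, ¬(b2 = x ∧ b3 = x ∧ b5 = x ∧ b7 = x)) →
    (∀ x : Bool, ¬(b2 = x ∧ b3 = x ∧ b6 = x ∧ b7 = x)) →
    (∀ x : Bool, ¬(b2 = x ∧ b5 = x ∧ b6 = x ∧ b7 = x)) →
    (∀ x : Bool, ¬(b4 = x ∧ b1 = x ∧ b3 = x ∧ b6 = x)) →
    (∀ x : Bool, ¬(b4 = x ∧ b1 = x ∧ b3 = x ∧ b7 = x)) →
    (∀ x : Bool, ¬(b4 = x ∧ b1 = x ∧ b5 = x ∧ b6 = x)) →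
    (∀ x : Bool, ¬(b4 = x ∧ b3 = x ∧ b5 = x ∧ b6 = x)) →
    (∀ x : Bool, ¬(b4 = x ∧ b3 = x ∧ b5 = x ∧ b7 = x)) →
    (∀ x : Bool, ¬(b4 = x ∧ b3 = x ∧ b6 = x ∧ b7 = x)) →
    (∀ x : Bool, ¬(b4 = x ∧ b5 = x ∧ b6 = x ∧ b7 = x)) →
    (∀ x : Bool, ¬(b5 = x ∧ b1 = x ∧ b2 = x ∧ b3 = x)) →
    (∀ x : Bool, ¬(b5 = x ∧ b1 = x ∧ b3 = x ∧ b4 = x)) →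
    (∀ x : Bool, ¬(b7 = x ∧ b1 = x ∧ b2 = x ∧ b6 = x)) →
    (∀ x : Bool, ¬(b7 = x ∧ b1 = x ∧ b2 = x ∧ b11 = x)) →
    (∀ x : Bool, ¬(b7 = x ∧ b1 = x ∧ b4 = x ∧ b6 = x)) →
    (∀ x : Bool, ¬(b7 = x ∧ b1 = x ∧ b4 = x ∧ b11 = x)) →
    (∀ x : Bool, ¬(b7 = x ∧ b1 = x ∧ b6 = x ∧ b11 = x)) →
    b8 = false → b11 = false ∧ ¬(b9 = false ∧ b10 = false) := by decide

/-! ### Explicit colorings for part (ii) -/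

def cGG : V11 → Bool := fun v => decide (v.val ∈ [1,3,5,6,7,9,10])
def cGW : V11 → Bool := fun v => decide (v.val ∈ [1,3,5,6,7,9])
def cWG : V11 → Bool := fun v => decide (v.val ∈ [1,3,5,6,7,10])

def gGray : ℕ → ℕ := fun n =>
  if n = 3 then 0 else if n = 5 then 1 else if n = 1 then 2 else if n = 7 then 3
  else if n = 6 then 4 else if n = 9 then 6 else 7

def gWhite : ℕ → ℕ := fun n =>
  if n = 2 then 0 else if n = 4 then 1 else if n = 9 then 2 else if n = 8 then 3
  else if n = 11 then 4 else 5

lemma ncard_helper {U : Set V11} [DecidablePred (· ∈ U)]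
    (h : ∀ v : V11, v ∈ U →
      (Finset.univ.filter (fun w => w ∈ U ∧ C'Graph.Adj v w)).card ≤ 2) :
    ∀ v ∈ U, {w | w ∈ U ∧ C'Graph.Adj v w}.ncard ≤ 2 := by
  intro v hv
  rw [Set.ncard_eq_toFinset_card', Set.toFinset_setOf]
  exact h v hv

set_option maxHeartbeats 2000000 in
lemma legalGG : IsLegal2Coloring C'Graph cGG :=
  ⟨⟨isAcyclic_of_labeling (fun w => gGray w.val.val) (by decide) (by decide),
    ncard_helper (by decide)⟩,
   ⟨isAcyclic_of_labeling (fun w => gWhite w.val.val) (by decide) (by decide),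
    ncard_helper (by decide)⟩⟩

set_option maxHeartbeats 2000000 in
lemma legalGW : IsLegal2Coloring C'Graph cGW :=
  ⟨⟨isAcyclic_of_labeling (fun w => gGray w.val.val) (by decide) (by decide),
    ncard_helper (by decide)⟩,
   ⟨isAcyclic_of_labeling (fun w => gWhite w.val.val) (by decide) (by decide),
    ncard_helper (by decide)⟩⟩

set_option maxHeartbeats 2000000 in
lemma legalWG : IsLegal2Coloring C'Graph cWG :=
  ⟨⟨isAcyclic_of_labeling (fun w => gGray w.val.val) (by decide) (by decide),
    ncard_helper (by decide)⟩,
   ⟨isAcyclic_of_labeling (fun w => gWhite w.val.val) (by decide) (by decide),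
    ncard_helper (by decide)⟩⟩

/-- (i) Every legal 2-coloring `c` of `C'` with `c 8 = white` satisfies `c 11 = white`
and the vertices 9 and 10 are not both white; and (ii) for every assignment of colors
to vertices 9 and 10 in which they are not both white, the 2-coloring whose gray class
is {1,3,5,6,7} together with the gray ones among 9, 10 is a legal 2-coloring of `C'`. -/
theorem stmt4 :
    (∀ c : V11 → Bool, IsLegal2Coloring C'Graph c → c ⟨8, by decide⟩ = false →
      c ⟨11, by decide⟩ = false ∧
      ¬ (c ⟨9, by decide⟩ = false ∧ c ⟨10, by decide⟩ = false)) ∧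
    (∀ c : V11 → Bool,
      (∀ v : V11, v.val ∈ ({1,3,5,6,7} : Set ℕ) → c v = true) →
      (∀ v : V11, v.val ∈ ({2,4,8,11} : Set ℕ) → c v = false) →
      ¬ (c ⟨9, by decide⟩ = false ∧ c ⟨10, by decide⟩ = false) →
      IsLegal2Coloring C'Graph c) := by
  constructor
  · intro c hL h8
    have F0 := mono_tri hL (a := ⟨1, by decide⟩) (b := ⟨2, by decide⟩) (d := ⟨4, by decide⟩) (by decide) (by decide) (by decide)
    have F1 := mono_tri hL (a := ⟨2, by decide⟩) (b := ⟨4, by decide⟩) (d := ⟨5, by decide⟩) (by decide) (by decide) (by decide)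
    have F2 := mono_tri hL (a := ⟨2, by decide⟩) (b := ⟨4, by decide⟩) (d := ⟨6, by decide⟩) (by decide) (by decide) (by decide)
    have F3 := mono_tri hL (a := ⟨2, by decide⟩) (b := ⟨4, by decide⟩) (d := ⟨7, by decide⟩) (by decide) (by decide) (by decide)
    have F4 := mono_quad hL (a := ⟨8, by decide⟩) (b := ⟨9, by decide⟩) (d := ⟨10, by decide⟩) (e := ⟨11, by decide⟩) (by decide) (by decide) (by decide) (by decide) (by decide) (by decide)
    have F5 := mono_deg hL (v := ⟨1, by decide⟩) (a := ⟨5, by decide⟩) (b := ⟨7, by decide⟩) (d := ⟨8, by decide⟩) (by decide) (by decide) (by decide) (by decide) (by decide) (by decide)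
    have F6 := mono_deg hL (v := ⟨2, by decide⟩) (a := ⟨1, by decide⟩) (b := ⟨3, by decide⟩) (d := ⟨6, by decide⟩) (by decide) (by decide) (by decide) (by decide) (by decide) (by decide)
    have F7 := mono_deg hL (v := ⟨2, by decide⟩) (a := ⟨1, by decide⟩) (b := ⟨3, by decide⟩) (d := ⟨7, by decide⟩) (by decide) (by decide) (by decide) (by decide) (by decide) (by decide)
    have F8 := mono_deg hL (v := ⟨2, by decide⟩) (a := ⟨1, by decide⟩) (b := ⟨5, by decide⟩) (d := ⟨6, by decide⟩) (by decide) (by decide) (by decide) (by decide) (by decide) (by decide)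
    have F9 := mono_deg hL (v := ⟨2, by decide⟩) (a := ⟨3, by decide⟩) (b := ⟨5, by decide⟩) (d := ⟨6, by decide⟩) (by decide) (by decide) (by decide) (by decide) (by decide) (by decide)
    have F10 := mono_deg hL (v := ⟨2, by decide⟩) (a := ⟨3, by decide⟩) (b := ⟨5, by decide⟩) (d := ⟨7, by decide⟩) (by decide) (by decide) (by decide) (by decide) (by decide) (by decide)
    have F11 := mono_deg hL (v := ⟨2, by decide⟩) (a := ⟨3, by decide⟩) (b := ⟨6, by decide⟩) (d := ⟨7, by decide⟩) (by decide) (by decide) (by decide) (by decide) (by decide) (by decide)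
    have F12 := mono_deg hL (v := ⟨2, by decide⟩) (a := ⟨5, by decide⟩) (b := ⟨6, by decide⟩) (d := ⟨7, by decide⟩) (by decide) (by decide) (by decide) (by decide) (by decide) (by decide)
    have F13 := mono_deg hL (v := ⟨4, by decide⟩) (a := ⟨1, by decide⟩) (b := ⟨3, by decide⟩) (d := ⟨6, by decide⟩) (by decide) (by decide) (by decide) (by decide) (by decide) (by decide)
    have F14 := mono_deg hL (v := ⟨4, by decide⟩) (a := ⟨1, by decide⟩) (b := ⟨3, by decide⟩) (d := ⟨7, by decide⟩) (by decide) (by decide) (by decide) (by decide) (by decide) (by decide)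
    have F15 := mono_deg hL (v := ⟨4, by decide⟩) (a := ⟨1, by decide⟩) (b := ⟨5, by decide⟩) (d := ⟨6, by decide⟩) (by decide) (by decide) (by decide) (by decide) (by decide) (by decide)
    have F16 := mono_deg hL (v := ⟨4, by decide⟩) (a := ⟨3, by decide⟩) (b := ⟨5, by decide⟩) (d := ⟨6, by decide⟩) (by decide) (by decide) (by decide) (by decide) (by decide) (by decide)
    have F17 := mono_deg hL (v := ⟨4, by decide⟩) (a := ⟨3, by decide⟩) (b := ⟨5, by decide⟩) (d := ⟨7, by decide⟩) (by decide) (by decide) (by decide) (by decide) (by decide) (by decide)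
    have F18 := mono_deg hL (v := ⟨4, by decide⟩) (a := ⟨3, by decide⟩) (b := ⟨6, by decide⟩) (d := ⟨7, by decide⟩) (by decide) (by decide) (by decide) (by decide) (by decide) (by decide)
    have F19 := mono_deg hL (v := ⟨4, by decide⟩) (a := ⟨5, by decide⟩) (b := ⟨6, by decide⟩) (d := ⟨7, by decide⟩) (by decide) (by decide) (by decide) (by decide) (by decide) (by decide)
    have F20 := mono_deg hL (v := ⟨5, by decide⟩) (a := ⟨1, by decide⟩) (b := ⟨2, by decide⟩) (d := ⟨3, by decide⟩) (by decide) (by decide) (by decide) (by decide) (by decide) (by decide)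
    have F21 := mono_deg hL (v := ⟨5, by decide⟩) (a := ⟨1, by decide⟩) (b := ⟨3, by decide⟩) (d := ⟨4, by decide⟩) (by decide) (by decide) (by decide) (by decide) (by decide) (by decide)
    have F22 := mono_deg hL (v := ⟨7, by decide⟩) (a := ⟨1, by decide⟩) (b := ⟨2, by decide⟩) (d := ⟨6, by decide⟩) (by decide) (by decide) (by decide) (by decide) (by decide) (by decide)
    have F23 := mono_deg hL (v := ⟨7, by decide⟩) (a := ⟨1, by decide⟩) (b := ⟨2, by decide⟩) (d := ⟨11, by decide⟩) (by decide) (by decide) (by decide) (by decide) (by decide) (by decide)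
    have F24 := mono_deg hL (v := ⟨7, by decide⟩) (a := ⟨1, by decide⟩) (b := ⟨4, by decide⟩) (d := ⟨6, by decide⟩) (by decide) (by decide) (by decide) (by decide) (by decide) (by decide)
    have F25 := mono_deg hL (v := ⟨7, by decide⟩) (a := ⟨1, by decide⟩) (b := ⟨4, by decide⟩) (d := ⟨11, by decide⟩) (by decide) (by decide) (by decide) (by decide) (by decide) (by decide)
    have F26 := mono_deg hL (v := ⟨7, by decide⟩) (a := ⟨1, by decide⟩) (b := ⟨6, by decide⟩) (d := ⟨11, by decide⟩) (by decide) (by decide) (by decide) (by decide) (by decide) (by decide)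
    exact keyBits _ _ _ _ _ _ _ _ _ _ _ F0 F1 F2 F3 F4 F5 F6 F7 F8 F9 F10 F11 F12 F13 F14 F15 F16 F17 F18 F19 F20 F21 F22 F23 F24 F25 F26 h8
  · intro c hg hw hn
    cases hc9 : c ⟨9, by decide⟩ <;> cases hc10 : c ⟨10, by decide⟩
    · exact absurd ⟨hc9, hc10⟩ hn
    · have hc : c = cWG := by
        funext v
        rcases v with ⟨n, hn'⟩
        obtain ⟨hl, hr⟩ := Finset.mem_Icc.mp hn'
        interval_cases n <;>
          first
            | ((refine (hg _ ?_).trans ?_ <;> norm_num [cGG, cGW, cWG]); done)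
            | ((refine (hw _ ?_).trans ?_ <;> norm_num [cGG, cGW, cWG]); done)
            | ((refine hc9.trans ?_; norm_num [cGG, cGW, cWG]); done)
            | ((refine hc10.trans ?_; norm_num [cGG, cGW, cWG]); done)
      rw [hc]; exact legalWG
    · have hc : c = cGW := by
        funext v
        rcases v with ⟨n, hn'⟩
        obtain ⟨hl, hr⟩ := Finset.mem_Icc.mp hn'
        interval_cases n <;>
          first
            | ((refine (hg _ ?_).trans ?_ <;> norm_num [cGG, cGW, cWG]); done)
            | ((refine (hw _ ?_).trans ?_ <;> norm_num [cGG, cGW, cWG]); done)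
            | ((refine hc9.trans ?_; norm_num [cGG, cGW, cWG]); done)
            | ((refine hc10.trans ?_; norm_num [cGG, cGW, cWG]); done)
      rw [hc]; exact legalGW
    · have hc : c = cGG := by
        funext v
        rcases v with ⟨n, hn'⟩
        obtain ⟨hl, hr⟩ := Finset.mem_Icc.mp hn'
        interval_cases n <;>
          first
            | ((refine (hg _ ?_).trans ?_ <;> norm_num [cGG, cGW, cWG]); done)
            | ((refine (hw _ ?_).trans ?_ <;> norm_num [cGG, cGW, cWG]); done)
            | ((refine hc9.trans ?_; norm_num [cGG, cGW, cWG]); done)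
            | ((refine hc10.trans ?_; norm_num [cGG, cGW, cWG]); done)
      rw [hc]; exact legalGG
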